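/- In a pointed unital quantum B-algebra (with unit u satisfying u → x = u ⇝ x = x), one has (x → y˜⁻)˜⁻ = x → y˜⁻ and (x ⇝ y⁻˜)⁻˜ = x ⇝ y⁻˜ for all x, y. -/
import Mathlib


class QuantumBAlgebra (X : Type*) extends PartialOrder X where
  arr : X → X → X
  sq : X → X → X
  qb1 : ∀ x y z : X, arr y z ≤ arr (arr x y) (arr x z)
  qb2 : ∀ x y z : X, sq y z ≤ arr (sq x y) (sq x z)
  qb3 : ∀ x y z : X, y ≤ z → arr x y ≤ arr x z
  qb4 : ∀ x y z : X, x ≤ arr y z ↔ y ≤ sq x z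

open QuantumBAlgebra

section Aux

variable {X : Type*} [QuantumBAlgebra X]

/-- sq is monotone in the second argument. -/
lemma QB.mono2_sq {a b c : X} (h : b ≤ c) : sq a b ≤ sq a c := by
  have h1 : a ≤ arr (sq a b) b := (qb4 a (sq a b) b).mpr le_rfl
  have h2 : a ≤ arr (sq a b) c := h1.trans (qb3 _ _ _ h)
  exact (qb4 a (sq a b) c).mp h2

/-- arr is antitone in the first argument. -/
lemma QB.anti1_arr {a b c : X} (h : a ≤ b) : arr b c ≤ arr a c := by
  have hb : b ≤ sq (arr b c) c := (qb4 (arr b c) b c).mp le_rfl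
  exact (qb4 (arr b c) a c).mpr (h.trans hb)

/-- sq is antitone in the first argument. -/
lemma QB.anti1_sq {a b c : X} (h : a ≤ b) : sq b c ≤ sq a c := by
  have hb : b ≤ arr (sq b c) c := (qb4 b (sq b c) c).mpr le_rfl
  exact (qb4 a (sq b c) c).mp (h.trans hb)

/-- a ≤ (a⁻)˜. -/
lemma QB.le_sq_arr (a d : X) : a ≤ sq (arr a d) d :=
  (qb4 (arr a d) a d).mp le_rfl

/-- a ≤ (a˜)⁻. -/
lemma QB.le_arr_sq (a d : X) : a ≤ arr (sq a d) d :=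
  (qb4 a (sq a d) d).mpr le_rfl

/-- In a unital algebra, sq a b ≤ arr a b. -/
lemma QB.sq_le_arr (u : X) (hu : ∀ x : X, arr u x = x ∧ sq u x = x) (a b : X) :
    sq a b ≤ arr a b := by
  have h := qb2 u a b
  rwa [(hu a).2, (hu b).2] at h

/-- Swap lemma (uses the unit). -/
lemma QB.swap (u : X) (hu : ∀ x : X, arr u x = x ∧ sq u x = x) {a b c : X}
    (h : a ≤ sq b c) : b ≤ sq a c :=
  (qb4 a b c).mp (h.trans (QB.sq_le_arr u hu b c))

/-- Contraposition via qb1: arr a b ≤ sq b⁻ a⁻. -/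
lemma QB.contra1 (a b d : X) : arr a b ≤ sq (arr b d) (arr a d) :=
  (qb4 (arr b d) (arr a b) (arr a d)).mp (qb1 a b d)

/-- Contraposition via qb2: sq a b ≤ sq b˜ a˜. -/
lemma QB.contra2 (a b d : X) : sq a b ≤ sq (sq b d) (sq a d) :=
  (qb4 (sq b d) (sq a b) (sq a d)).mp (qb2 a b d)

end Aux

theorem stmt8 {X : Type*} [QuantumBAlgebra X] (d u : X)
    (hu : ∀ x : X, arr u x = x ∧ sq u x = x) (x y : X) :
    arr (sq (arr x (arr (sq y d) d)) d) d = arr x (arr (sq y d) d) ∧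
    sq (arr (sq x (sq (arr y d) d)) d) d = sq x (sq (arr y d) d) := by
  constructor
  · -- A := (y˜)⁻, t := x → A; show (t˜)⁻ = t
    set A : X := arr (sq y d) d with hAdef
    set t : X := arr x A with htdef
    -- A is ˜⁻-closed (one inequality suffices)
    have hA : arr (sq A d) d ≤ A := by
      have h1 : sq y d ≤ sq A d := QB.le_sq_arr (sq y d) d
      exact QB.anti1_arr h1
    refine le_antisymm ?_ (QB.le_arr_sq t d)
    have h1 : x ≤ sq t A := (qb4 t x A).mp le_rfl
    have h2 : x ≤ sq (sq A d) (sq t d) := h1.trans (QB.contra2 t A d)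
    have h3 : sq A d ≤ sq x (sq t d) := QB.swap u hu h2
    have h4 : x ≤ arr (sq A d) (sq t d) := (qb4 x (sq A d) (sq t d)).mpr h3
    have h5 : x ≤ sq (arr (sq t d) d) (arr (sq A d) d) :=
      h4.trans (QB.contra1 (sq A d) (sq t d) d)
    have h6 : x ≤ sq (arr (sq t d) d) A := h5.trans (QB.mono2_sq hA)
    exact (qb4 (arr (sq t d) d) x A).mpr h6
  · -- B := (y⁻)˜, t := x ⇝ B; show (t⁻)˜ = t
    set B : X := sq (arr y d) d with hBdef
    set t : X := sq x B with htdef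
    have hB : sq (arr B d) d ≤ B := by
      have h1 : arr y d ≤ arr B d := QB.le_arr_sq (arr y d) d
      exact QB.anti1_sq h1
    refine le_antisymm ?_ (QB.le_sq_arr t d)
    have h1 : x ≤ arr t B := (qb4 x t B).mpr le_rfl
    have h2 : x ≤ sq (arr B d) (arr t d) := h1.trans (QB.contra1 t B d)
    have h4 : x ≤ sq (sq (arr t d) d) (sq (arr B d) d) :=
      h2.trans (QB.contra2 (arr B d) (arr t d) d)
    have h5 : x ≤ sq (sq (arr t d) d) B := h4.trans (QB.mono2_sq hB)
    exact QB.swap u hu h5
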